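/- Let Ω ⊂ ℝ² be a bounded measurable set, let θ : ℝ² → ℝ² be a compactly supported C¹ vector field, and let φ : ℝ² × ℝ → ℝ be a C¹ function with compact support. Then the function t ↦ ∫_{T_t(Ω)} φ(x,t) dx (the integral of φ(·,t) over the deformed set T_t(Ω) = {x + tθ(x) : x ∈ Ω}) is differentiable at t = 0 with derivative ∫_Ω ( φ̇(x) + (div θ)(x) · φ(x,0) ) dx. -/

import Mathlib

open MeasureTheory

abbrev E2 := EuclideanSpace ℝ (Fin 2)

lemma det_one_add_smul_two (t : ℝ) (f : E2 →ₗ[ℝ] E2) :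
    LinearMap.det (1 + t • f) =
      1 + t * LinearMap.trace ℝ E2 f + t ^ 2 * LinearMap.det f := by
  classical
  set b := (EuclideanSpace.basisFun (Fin 2) ℝ).toBasis
  rw [← LinearMap.det_toMatrix b, ← LinearMap.det_toMatrix b f,
    LinearMap.trace_eq_matrix_trace ℝ b]
  rw [map_add, _root_.map_smul, LinearMap.toMatrix_one]
  set M := LinearMap.toMatrix b b f
  simp only [Matrix.det_fin_two, Matrix.trace_fin_two, Matrix.add_apply, Matrix.smul_apply,
    Matrix.one_apply_eq, Matrix.one_apply_ne (by decide : (0 : Fin 2) ≠ 1),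
    Matrix.one_apply_ne (by decide : (1 : Fin 2) ≠ 0), smul_eq_mul]
  ring

lemma exists_norm_bound {X V : Type*} [TopologicalSpace X] [Nonempty X]
    [NormedAddCommGroup V] {f : X → V}
    (hf : Continuous f) (h : HasCompactSupport f) : ∃ C : ℝ, 0 ≤ C ∧ ∀ x, ‖f x‖ ≤ C := by
  have h1 : Continuous fun x => ‖f x‖ := hf.norm
  have h2 : HasCompactSupport fun x => ‖f x‖ := h.norm
  obtain ⟨x₀, hx₀⟩ := h1.exists_forall_ge_of_hasCompactSupport h2
  exact ⟨‖f x₀‖, norm_nonneg _, hx₀⟩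

set_option maxHeartbeats 2000000 in
theorem shape_derivative_domain_integral
    (Ω : Set (EuclideanSpace ℝ (Fin 2)))
    (hΩm : MeasurableSet Ω) (hΩb : Bornology.IsBounded Ω)
    (θ : EuclideanSpace ℝ (Fin 2) → EuclideanSpace ℝ (Fin 2))
    (hθ : ContDiff ℝ 1 θ) (hθc : HasCompactSupport θ)
    (φ : EuclideanSpace ℝ (Fin 2) × ℝ → ℝ)
    (hφ : ContDiff ℝ 1 φ) (hφc : HasCompactSupport φ) :
    HasDerivAt
      (fun t : ℝ => ∫ x in (fun y => y + t • θ y) '' Ω, φ (x, t))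
      (∫ x in Ω,
        ((fderiv ℝ φ (x, (0 : ℝ))) (θ x, (1 : ℝ)) +
          (LinearMap.trace ℝ (EuclideanSpace ℝ (Fin 2)) (fderiv ℝ θ x).toLinearMap) * φ (x, 0)))
      0 := by
  classical
  have hθd : Differentiable ℝ θ := hθ.differentiable one_ne_zero
  have hφd : Differentiable ℝ φ := hφ.differentiable one_ne_zero
  set A : E2 → (E2 →L[ℝ] E2) := fun x => fderiv ℝ θ x with hA
  have contA : Continuous A := hθ.continuous_fderiv one_ne_zero
  have hAc : HasCompactSupport A := hθc.fderiv ℝ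
  set τ : E2 → ℝ := fun x => LinearMap.trace ℝ E2 (A x).toLinearMap with hτdef
  have contTr : Continuous fun g : E2 →L[ℝ] E2 => LinearMap.trace ℝ E2 g.toLinearMap :=
    LinearMap.continuous_of_finiteDimensional
      ((LinearMap.trace ℝ E2).comp (ContinuousLinearMap.coeLM ℝ))
  have contτ : Continuous τ := contTr.comp contA
  have hτc : HasCompactSupport τ := by
    refine hAc.comp_left (g := fun g : E2 →L[ℝ] E2 => LinearMap.trace ℝ E2 g.toLinearMap) ?_
    show LinearMap.trace ℝ E2 ((0 : E2 →L[ℝ] E2) : E2 →ₗ[ℝ] E2) = 0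
    have h0 : ((0 : E2 →L[ℝ] E2) : E2 →ₗ[ℝ] E2) = 0 := rfl
    rw [h0, map_zero]
  set δ₂ : E2 → ℝ := fun x => LinearMap.det (A x).toLinearMap with hδdef
  have contδ : Continuous δ₂ := ContinuousLinearMap.continuous_det.comp contA
  have hδc : HasCompactSupport δ₂ := by
    refine hAc.comp_left (g := fun g : E2 →L[ℝ] E2 => LinearMap.det g.toLinearMap) ?_
    show LinearMap.det ((0 : E2 →L[ℝ] E2) : E2 →ₗ[ℝ] E2) = 0
    have h0 : ((0 : E2 →L[ℝ] E2) : E2 →ₗ[ℝ] E2) = 0 := rfl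
    rw [h0, LinearMap.det_zero' ((EuclideanSpace.basisFun (Fin 2) ℝ).toBasis)]
  -- bounds
  obtain ⟨L, hL0, hL⟩ := exists_norm_bound contA hAc
  obtain ⟨Cθ, hCθ0, hCθ⟩ := exists_norm_bound hθ.continuous hθc
  obtain ⟨Cτ, hCτ0, hCτ⟩ := exists_norm_bound contτ hτc
  obtain ⟨Cδ, hCδ0, hCδ⟩ := exists_norm_bound contδ hδc
  obtain ⟨Cφ, hCφ0, hCφ⟩ := exists_norm_bound hφ.continuous hφc
  obtain ⟨CD, hCD0, hCD⟩ := exists_norm_bound (hφ.continuous_fderiv one_ne_zero) (hφc.fderiv ℝ)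
  simp only [Real.norm_eq_abs] at hCτ hCδ hCφ
  -- epsilon
  set ε : ℝ := min 1 (min (1 / (2 * (L + 1))) (1 / (2 * (Cτ + Cδ + 1)))) with hεdef
  have hε : 0 < ε := by
    refine lt_min one_pos (lt_min (by positivity) (by positivity))
  have hε1 : ε ≤ 1 := min_le_left _ _
  have hε2 : ε ≤ 1 / (2 * (L + 1)) := le_trans (min_le_right _ _) (min_le_left _ _)
  have hε3 : ε ≤ 1 / (2 * (Cτ + Cδ + 1)) := le_trans (min_le_right _ _) (min_le_right _ _)
  -- lipschitz
  have hlip : LipschitzWith (Real.toNNReal L) θ := by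
    refine lipschitzWith_of_nnnorm_fderiv_le hθd fun x => ?_
    simpa [← NNReal.coe_le_coe, Real.coe_toNNReal _ hL0] using hL x
  have hinj : ∀ t : ℝ, |t| < ε → Function.Injective (fun y : E2 => y + t • θ y) := by
    intro t ht x y hxy
    by_contra hne
    have hxy' : x + t • θ x = y + t • θ y := hxy
    have h1 : x - y = t • (θ y - θ x) := by
      rw [smul_sub]
      abel_nf
      abel_nf at hxy'
      linear_combination (norm := abel) hxy'
    have hθL : ‖θ y - θ x‖ ≤ L * ‖x - y‖ := by
      have := hlip.dist_le_mul y x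
      rw [dist_eq_norm, dist_eq_norm] at this
      calc ‖θ y - θ x‖ ≤ ↑(Real.toNNReal L) * ‖y - x‖ := this
        _ = L * ‖x - y‖ := by rw [Real.coe_toNNReal _ hL0, norm_sub_rev]
    have h2 : ‖x - y‖ ≤ |t| * (L * ‖x - y‖) := by
      calc ‖x - y‖ = |t| * ‖θ y - θ x‖ := by rw [h1, norm_smul, Real.norm_eq_abs]
        _ ≤ |t| * (L * ‖x - y‖) := mul_le_mul_of_nonneg_left hθL (abs_nonneg t)
    have h3 : 0 < ‖x - y‖ := by
      rw [norm_pos_iff]; exact sub_ne_zero_of_ne hne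
    have h4 : |t| * L < 1 := by
      have h5 := lt_of_lt_of_le ht hε2
      have h6 : 0 < 2 * (L + 1) := by positivity
      rw [lt_div_iff₀ h6] at h5
      nlinarith [abs_nonneg t]
    nlinarith
  -- positivity of the determinant factor
  have hdpos : ∀ t : ℝ, |t| < ε → ∀ x, (1:ℝ)/2 ≤ 1 + t * τ x + t ^ 2 * δ₂ x := by
    intro t ht x
    have h1 : |t| ≤ 1 := le_of_lt (lt_of_lt_of_le ht hε1)
    have h2 : |t| < 1 / (2 * (Cτ + Cδ + 1)) := lt_of_lt_of_le ht hε3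
    have h3 := hCτ x
    have h4 := hCδ x
    have h5 : |t * τ x| ≤ |t| * Cτ := by
      rw [abs_mul]; exact mul_le_mul_of_nonneg_left h3 (abs_nonneg t)
    have h6 : |t ^ 2 * δ₂ x| ≤ |t| * Cδ := by
      rw [abs_mul, abs_pow]
      have e1 : |t| ^ 2 ≤ |t| := by nlinarith [abs_nonneg t]
      exact mul_le_mul e1 h4 (abs_nonneg _) (abs_nonneg t)
    have h7 : |t| * (Cτ + Cδ) < 1/2 := by
      have h8 : 0 < 2 * (Cτ + Cδ + 1) := by positivity
      rw [lt_div_iff₀ h8] at h2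
      nlinarith [abs_nonneg t]
    nlinarith [neg_abs_le (t * τ x), neg_abs_le (t ^ 2 * δ₂ x)]
  -- finite measure
  haveI : IsFiniteMeasure ((volume : Measure E2).restrict Ω) :=
    ⟨by rw [Measure.restrict_apply_univ]; exact hΩb.measure_lt_top⟩
  -- the integrand after change of variables, and its t-derivative
  set F : ℝ → E2 → ℝ := fun t x => (1 + t * τ x + t ^ 2 * δ₂ x) * φ (x + t • θ x, t) with hFdef
  set F' : ℝ → E2 → ℝ := fun t x => (τ x + 2 * t * δ₂ x) * φ (x + t • θ x, t)
      + (1 + t * τ x + t ^ 2 * δ₂ x) * (fderiv ℝ φ (x + t • θ x, t)) (θ x, 1) with hF'def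
  -- change of variables
  have hchg : ∀ t : ℝ, |t| < ε →
      (∫ x in (fun y => y + t • θ y) '' Ω, φ (x, t)) = ∫ x in Ω, F t x := by
    intro t ht
    have hfd : ∀ x ∈ Ω, HasFDerivWithinAt (fun y : E2 => y + t • θ y)
        (ContinuousLinearMap.id ℝ E2 + t • A x) Ω x := fun x _ =>
      ((hasFDerivAt_id x).add (((hθd x).hasFDerivAt).const_smul t)).hasFDerivWithinAt
    rw [integral_image_eq_integral_abs_det_fderiv_smul volume hΩm hfd
      ((hinj t ht).injOn) (fun x => φ (x, t))]
    refine setIntegral_congr_fun hΩm fun x _ => ?_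
    have hdet : (ContinuousLinearMap.id ℝ E2 + t • A x).det
        = 1 + t * τ x + t ^ 2 * δ₂ x := by
      have hco : ((ContinuousLinearMap.id ℝ E2 + t • A x : E2 →L[ℝ] E2) : E2 →ₗ[ℝ] E2)
          = 1 + t • ((A x : E2 →L[ℝ] E2) : E2 →ₗ[ℝ] E2) := rfl
      rw [ContinuousLinearMap.det, hco, det_one_add_smul_two]
    show |(ContinuousLinearMap.id ℝ E2 + t • A x).det| • φ (x + t • θ x, t) = F t x
    rw [hdet, abs_of_pos (lt_of_lt_of_le one_half_pos (hdpos t ht x)), smul_eq_mul]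
  -- uniform bound on the determinant factor
  have hdbound : ∀ t : ℝ, |t| ≤ 1 → ∀ x, |1 + t * τ x + t ^ 2 * δ₂ x| ≤ 1 + Cτ + Cδ := by
    intro t ht x
    have h5 : |t * τ x| ≤ Cτ := by
      rw [abs_mul]
      calc |t| * |τ x| ≤ 1 * Cτ := mul_le_mul ht (hCτ x) (abs_nonneg _) zero_le_one
        _ = Cτ := one_mul _
    have h6 : |t ^ 2 * δ₂ x| ≤ Cδ := by
      rw [abs_mul, abs_pow]
      have e1 : |t| ^ 2 ≤ 1 := by nlinarith [abs_nonneg t]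
      calc |t| ^ 2 * |δ₂ x| ≤ 1 * Cδ := mul_le_mul e1 (hCδ x) (abs_nonneg _) zero_le_one
        _ = Cδ := one_mul _
    calc |1 + t * τ x + t ^ 2 * δ₂ x| ≤ |1 + t * τ x| + |t ^ 2 * δ₂ x| := abs_add_le _ _
      _ ≤ |(1:ℝ)| + |t * τ x| + |t ^ 2 * δ₂ x| := by linarith [abs_add_le (1:ℝ) (t * τ x)]
      _ ≤ 1 + Cτ + Cδ := by rw [abs_one]; linarith
  -- continuity of F t
  have contpath : ∀ t : ℝ, Continuous fun x : E2 => (x + t • θ x, t) :=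
    fun t => (continuous_id.add (hθ.continuous.const_smul t)).prodMk continuous_const
  have contF : ∀ t : ℝ, Continuous (F t) := fun t =>
    ((continuous_const.add (continuous_const.mul contτ)).add
      (continuous_const.mul contδ)).mul (hφ.continuous.comp (contpath t))
  have contDφ : Continuous (fderiv ℝ φ) := hφ.continuous_fderiv one_ne_zero
  have contF'0 : Continuous (F' 0) := by
    apply Continuous.add
    · exact (contτ.add (continuous_const.mul contδ)).mul (hφ.continuous.comp (contpath 0))
    · exact ((continuous_const.add (continuous_const.mul contτ)).add
        (continuous_const.mul contδ)).mul
        ((contDφ.comp (contpath 0)).clm_apply (hθ.continuous.prodMk continuous_const))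
  -- integrability of F 0
  have hFint : Integrable (F 0) ((volume : Measure E2).restrict Ω) := by
    refine ⟨(contF 0).aestronglyMeasurable, ?_⟩
    refine HasFiniteIntegral.of_bounded (C := (1 + Cτ + Cδ) * Cφ)
      (Filter.Eventually.of_forall fun x => ?_)
    rw [Real.norm_eq_abs, hFdef]
    show |(1 + 0 * τ x + 0 ^ 2 * δ₂ x) * φ (x + (0:ℝ) • θ x, 0)| ≤ _
    rw [abs_mul]
    exact mul_le_mul (hdbound 0 (by simp) x) (hCφ _) (abs_nonneg _) (by linarith)
  -- bound on F'
  set K : ℝ := (Cτ + 2 * Cδ) * Cφ + (1 + Cτ + Cδ) * (CD * (Cθ + 1)) with hKdef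
  have hF'le : ∀ x : E2, ∀ t ∈ Metric.ball (0:ℝ) ε, ‖F' t x‖ ≤ K := by
    intro x t ht
    rw [Metric.mem_ball, Real.dist_eq, sub_zero] at ht
    have ht' : |t| ≤ 1 := le_of_lt (lt_of_lt_of_le ht hε1)
    rw [Real.norm_eq_abs, hF'def]
    have ha : |τ x + 2 * t * δ₂ x| ≤ Cτ + 2 * Cδ := by
      have h7 : |2 * t * δ₂ x| ≤ 2 * Cδ := by
        rw [abs_mul, abs_mul, abs_two]
        have : |t| * |δ₂ x| ≤ 1 * Cδ := mul_le_mul ht' (hCδ x) (abs_nonneg _) zero_le_one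
        nlinarith [abs_nonneg t, abs_nonneg (δ₂ x)]
      calc |τ x + 2 * t * δ₂ x| ≤ |τ x| + |2 * t * δ₂ x| := abs_add_le _ _
        _ ≤ Cτ + 2 * Cδ := add_le_add (hCτ x) h7
    have hv : ‖((θ x, (1:ℝ)) : E2 × ℝ)‖ ≤ Cθ + 1 := by
      rw [Prod.norm_def]
      apply max_le
      · simp only []; linarith [hCθ x]
      · rw [norm_one]; linarith
    have hb : |(fderiv ℝ φ (x + t • θ x, t)) (θ x, 1)| ≤ CD * (Cθ + 1) := by
      rw [← Real.norm_eq_abs]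
      calc ‖(fderiv ℝ φ (x + t • θ x, t)) (θ x, 1)‖
          ≤ ‖fderiv ℝ φ (x + t • θ x, t)‖ * ‖((θ x, (1:ℝ)) : E2 × ℝ)‖ :=
            (fderiv ℝ φ (x + t • θ x, t)).le_opNorm _
        _ ≤ CD * (Cθ + 1) := mul_le_mul (hCD _) hv (norm_nonneg _) hCD0
    calc |(τ x + 2 * t * δ₂ x) * φ (x + t • θ x, t)
          + (1 + t * τ x + t ^ 2 * δ₂ x) * (fderiv ℝ φ (x + t • θ x, t)) (θ x, 1)|
        ≤ |(τ x + 2 * t * δ₂ x) * φ (x + t • θ x, t)|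
          + |(1 + t * τ x + t ^ 2 * δ₂ x) * (fderiv ℝ φ (x + t • θ x, t)) (θ x, 1)| := abs_add_le _ _
      _ ≤ (Cτ + 2 * Cδ) * Cφ + (1 + Cτ + Cδ) * (CD * (Cθ + 1)) := by
          rw [abs_mul, abs_mul]
          exact add_le_add
            (mul_le_mul ha (hCφ _) (abs_nonneg _) (by linarith))
            (mul_le_mul (hdbound t ht' x) hb (abs_nonneg _) (by linarith))
      _ = K := hKdef.symm
  -- differentiability in t
  have hdiff : ∀ x : E2, ∀ t : ℝ, HasDerivAt (fun s => F s x) (F' t x) t := by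
    intro x t
    have hpath : HasDerivAt (fun s : ℝ => ((x + s • θ x, s) : E2 × ℝ)) ((θ x, 1) : E2 × ℝ) t := by
      have h1 : HasDerivAt (fun s : ℝ => x + s • θ x) (θ x) t := by
        simpa using ((hasDerivAt_id t).smul_const (θ x)).const_add x
      exact h1.prodMk (hasDerivAt_id t)
    have hcomp : HasDerivAt (fun s : ℝ => φ (x + s • θ x, s))
        ((fderiv ℝ φ (x + t • θ x, t)) (θ x, 1)) t :=
      (hφd _).hasFDerivAt.comp_hasDerivAt t hpath
    have hpoly : HasDerivAt (fun s : ℝ => 1 + s * τ x + s ^ 2 * δ₂ x)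
        (τ x + 2 * t * δ₂ x) t := by
      have h2 : HasDerivAt (fun s : ℝ => 1 + s * τ x) (τ x) t := by
        simpa using ((hasDerivAt_id t).mul_const (τ x)).const_add 1
      have h3 : HasDerivAt (fun s : ℝ => s ^ 2 * δ₂ x) (2 * t * δ₂ x) t := by
        simpa [mul_assoc] using (hasDerivAt_pow 2 t).mul_const (δ₂ x)
      exact h2.add h3
    exact hpoly.mul hcomp
  -- apply the dominated-derivative theorem
  have key := hasDerivAt_integral_of_dominated_loc_of_deriv_le
    (μ := (volume : Measure E2).restrict Ω) (F := F) (F' := F') (x₀ := (0:ℝ))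
    (bound := fun _ => K) (Metric.ball_mem_nhds (0:ℝ) hε)
    (Filter.Eventually.of_forall fun t => (contF t).aestronglyMeasurable)
    hFint
    contF'0.aestronglyMeasurable
    (Filter.Eventually.of_forall fun x t ht => hF'le x t ht)
    (integrable_const K)
    (Filter.Eventually.of_forall fun x t _ => hdiff x t)
  have hG := key.2
  have heq : (fun t : ℝ => ∫ x in (fun y => y + t • θ y) '' Ω, φ (x, t))
      =ᶠ[nhds 0] fun t => ∫ x, F t x ∂((volume : Measure E2).restrict Ω) := by
    filter_upwards [Metric.ball_mem_nhds (0:ℝ) hε] with t ht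
    rw [Metric.mem_ball, Real.dist_eq, sub_zero] at ht
    exact hchg t ht
  have hval : (∫ x, F' 0 x ∂((volume : Measure E2).restrict Ω))
      = ∫ x in Ω, ((fderiv ℝ φ (x, (0 : ℝ))) (θ x, (1 : ℝ)) +
          (LinearMap.trace ℝ E2 (fderiv ℝ θ x).toLinearMap) * φ (x, 0)) := by
    refine integral_congr_ae (Filter.Eventually.of_forall fun x => ?_)
    show (τ x + 2 * 0 * δ₂ x) * φ (x + (0:ℝ) • θ x, 0)
        + (1 + 0 * τ x + (0:ℝ) ^ 2 * δ₂ x) * (fderiv ℝ φ (x + (0:ℝ) • θ x, 0)) (θ x, 1) = _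
    rw [zero_smul, add_zero]
    show (τ x + 2 * 0 * δ₂ x) * φ (x, 0)
        + (1 + 0 * τ x + (0:ℝ) ^ 2 * δ₂ x) * (fderiv ℝ φ (x, 0)) (θ x, 1) = _
    rw [hτdef]
    ring
  rw [← hval]
  exact hG.congr_of_eventuallyEq heq
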